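/- Let r ≥ 1 and let X be a finite set of cardinality 2r. Let α and β be fixed-point-free involutions of X (pairings). Then the number of orbits of the natural action on X of the subgroup of the permutation group of X generated by α and β equals #(α∘β)/2; equivalently, it equals r − |α∘β|/2. -/

import Mathlib

/-- The number of cycles of a permutation `σ` of a finite set `X`:
the number of orbits on `X` of the cyclic group generated by `σ`
(cycles counted including fixed points). -/
noncomputable def permCycles {X : Type*} (σ : Equiv.Perm X) : ℕ :=
  Nat.card (MulAction.orbitRel.Quotient (Subgroup.zpowers σ) X)

/-- The length `|σ| = card X - #σ` of a permutation. -/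
noncomputable def permLength {X : Type*} (σ : Equiv.Perm X) : ℕ :=
  Nat.card X - permCycles σ

/-- A pairing of `X` is a fixed-point-free involution of `X`. -/
def IsPairing {X : Type*} (α : Equiv.Perm X) : Prop :=
  α * α = 1 ∧ ∀ x, α x ≠ x

open MulAction

section
variable {X : Type*} [Fintype X] (α β : Equiv.Perm X)

/-- Core combinatorial lemma. -/
theorem aux_card (hα : α * α = 1 ∧ ∀ x, α x ≠ x) (hβ : β * β = 1 ∧ ∀ x, β x ≠ x) :
    Nat.card (MulAction.orbitRel.Quotient (Subgroup.zpowers (α * β)) X)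
      = 2 * Nat.card (MulAction.orbitRel.Quotient
          (Subgroup.closure {α, β} : Subgroup (Equiv.Perm X)) X) := by
  classical
  obtain ⟨hα2, hαf⟩ := hα
  obtain ⟨hβ2, hβf⟩ := hβ
  set σ := α * β with hσ
  set G : Subgroup (Equiv.Perm X) := Subgroup.closure {α, β} with hG
  have hαi : α⁻¹ = α := inv_eq_of_mul_eq_one_right hα2
  have hβi : β⁻¹ = β := inv_eq_of_mul_eq_one_right hβ2
  have hαα : ∀ y, α (α y) = y := fun y => by
    have := congrArg (fun f : Equiv.Perm X => f y) hα2
    simpa [Equiv.Perm.mul_apply] using this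
  have hββ : ∀ z, β (β z) = z := fun z => by
    have := congrArg (fun f : Equiv.Perm X => f z) hβ2
    simpa [Equiv.Perm.mul_apply] using this
  have hασ : α * σ = β := by rw [hσ, ← mul_assoc, hα2, one_mul]
  have hsc : SemiconjBy α σ σ⁻¹ := by
    unfold SemiconjBy
    rw [hασ, hσ, mul_inv_rev, hαi, hβi, mul_assoc, hα2, mul_one]
  have key : ∀ (k : ℤ) (y : X), α ((σ ^ k) y) = (σ ^ (-k)) (α y) := by
    intro k y
    have h := hsc.zpow_right k
    have h2 : α * σ ^ k = σ ^ (-k) * α := by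
      simpa [SemiconjBy, inv_zpow, zpow_neg] using h
    have := congrArg (fun f : Equiv.Perm X => f y) h2
    simpa [Equiv.Perm.mul_apply] using this
  have hcomp : ∀ (m n : ℤ) (y : X), (σ ^ m) ((σ ^ n) y) = (σ ^ (m + n)) y := by
    intro m n y
    rw [zpow_add, Equiv.Perm.mul_apply]
  have hβσ : ∀ (k : ℤ) (y : X), β ((σ ^ k) y) = α ((σ ^ (k + 1)) y) := by
    intro k y
    have : β ((σ ^ k) y) = (α * σ) ((σ ^ k) y) := by rw [hασ]
    rw [this, Equiv.Perm.mul_apply]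
    congr 1
    have : σ ((σ ^ k) y) = (σ ^ (1 : ℤ)) ((σ ^ k) y) := by rw [zpow_one]
    rw [this, hcomp, add_comm]
  -- no power of σ sends x to α x
  have hkey : ∀ x : X, ¬ ∃ k : ℤ, (σ ^ k) x = α x := by
    rintro x ⟨k, hk⟩
    rcases Int.even_or_odd k with ⟨j, hj⟩ | ⟨j, hj⟩
    · apply hαf ((σ ^ j) x)
      rw [key j x, ← hk, hcomp, show -j + k = j by omega]
    · apply hβf ((σ ^ j) x)
      rw [hβσ j x, key (j+1) x, ← hk, hcomp, show -(j+1) + k = j by omega]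
  have hσG : σ ∈ G := mul_mem
    (Subgroup.subset_closure (by simp)) (Subgroup.subset_closure (by simp))
  have hαG : α ∈ G := Subgroup.subset_closure (by simp)
  -- orbit characterization
  have horb : ∀ x y : X, y ∈ orbit (Subgroup.zpowers σ) x ↔ ∃ k : ℤ, (σ ^ k) x = y := by
    intro x y
    constructor
    · rintro ⟨⟨g, k, rfl⟩, rfl⟩
      exact ⟨k, rfl⟩
    · rintro ⟨k, rfl⟩
      exact ⟨⟨σ ^ k, ⟨k, rfl⟩⟩, rfl⟩
  -- invariance of the pair of orbits
  have hTinv : ∀ (x : X) (g : Equiv.Perm X), g ∈ G → ∀ y : X,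
      (y ∈ orbit (Subgroup.zpowers σ) x ∪ orbit (Subgroup.zpowers σ) (α x)) ↔
      (g y ∈ orbit (Subgroup.zpowers σ) x ∪ orbit (Subgroup.zpowers σ) (α x)) := by
    intro x g hg
    set T : Set X := orbit (Subgroup.zpowers σ) x ∪ orbit (Subgroup.zpowers σ) (α x) with hT
    have hmapα : ∀ y ∈ T, α y ∈ T := by
      rintro y (hy | hy)
      · obtain ⟨k, rfl⟩ := (horb x y).mp hy
        right
        exact (horb _ _).mpr ⟨-k, (key k x).symm⟩
      · obtain ⟨k, rfl⟩ := (horb _ y).mp hy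
        left
        refine (horb _ _).mpr ⟨-k, ?_⟩
        rw [← hαα ((σ ^ (-k)) x)]
        congr 1
        rw [key (-k) x, neg_neg]
    have hmapβ : ∀ y ∈ T, β y ∈ T := by
      rintro y (hy | hy)
      · obtain ⟨k, rfl⟩ := (horb x y).mp hy
        right
        refine (horb _ _).mpr ⟨-(k+1), ?_⟩
        rw [hβσ k x, key (k+1) x]
      · obtain ⟨k, rfl⟩ := (horb _ y).mp hy
        left
        refine (horb _ _).mpr ⟨-(k+1), ?_⟩
        rw [hβσ k (α x), key (k+1) (α x), hαα]
    induction hg using Subgroup.closure_induction with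
    | mem s hs =>
      rcases hs with rfl | rfl
      · intro y
        constructor
        · exact hmapα y
        · intro h
          have := hmapα _ h
          rwa [hαα] at this
      · intro y
        constructor
        · exact hmapβ y
        · intro h
          have := hmapβ _ h
          rwa [hββ] at this
    | one => simp
    | mul a b ha hb iha ihb =>
      intro y
      simp only [Equiv.Perm.mul_apply]
      exact (ihb y).trans (iha (b y))
    | inv a ha iha =>
      intro y
      constructor
      · intro h
        have := (iha (a⁻¹ y)).mpr
        rw [show a (a⁻¹ y) = y from Equiv.apply_symm_apply a y] at this
        exact this h
      · intro h
        have := (iha (a⁻¹ y)).mp h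
        rwa [show a (a⁻¹ y) = y from Equiv.apply_symm_apply a y] at this
  -- the projection between quotients
  let f : orbitRel.Quotient (Subgroup.zpowers σ) X → orbitRel.Quotient G X :=
    Quotient.map' id (fun a b h => by
      rw [orbitRel_apply] at h ⊢
      obtain ⟨⟨g, k, rfl⟩, rfl⟩ := h
      exact ⟨⟨σ ^ k, zpow_mem hσG k⟩, rfl⟩)
  have hfmk : ∀ y : X, f (Quotient.mk'' y) = Quotient.mk'' y := fun y => rfl
  have hQσfin : Finite (orbitRel.Quotient (Subgroup.zpowers σ) X) := Quotient.finite _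
  have hQGfin : Finite (orbitRel.Quotient G X) := Quotient.finite _
  letI := Fintype.ofFinite (orbitRel.Quotient (Subgroup.zpowers σ) X)
  letI := Fintype.ofFinite (orbitRel.Quotient G X)
  have hfiber : ∀ q : orbitRel.Quotient G X, Nat.card {p // f p = q} = 2 := by
    intro q
    induction q using Quotient.inductionOn' with
    | h x =>
      have hne : (Quotient.mk'' x : orbitRel.Quotient (Subgroup.zpowers σ) X)
          ≠ Quotient.mk'' (α x) := by
        intro h
        rw [Quotient.eq'', orbitRel_apply] at h
        obtain ⟨k, hk⟩ := (horb _ _).mp h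
        refine hkey x ⟨-k, ?_⟩
        have h2 : (σ ^ (-k)) x = (σ ^ (-k)) ((σ ^ k) (α x)) := by rw [hk]
        rw [h2, hcomp, neg_add_cancel, zpow_zero, Equiv.Perm.one_apply]
      have hset : {p | f p = Quotient.mk'' x} =
          ({Quotient.mk'' x, Quotient.mk'' (α x)} :
            Set (orbitRel.Quotient (Subgroup.zpowers σ) X)) := by
        ext p
        induction p using Quotient.inductionOn' with
        | h y =>
          simp only [Set.mem_setOf_eq, Set.mem_insert_iff, Set.mem_singleton_iff]
          constructor
          · intro h
            rw [hfmk, Quotient.eq'', orbitRel_apply] at h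
            obtain ⟨⟨g, hg⟩, rfl⟩ := h
            have hx : (x : X) ∈ orbit (Subgroup.zpowers σ) x ∪
                orbit (Subgroup.zpowers σ) (α x) := Or.inl (mem_orbit_self x)
            rcases (hTinv x g hg x).mp hx with h1 | h1
            · exact Or.inl (Quotient.sound' ((orbitRel_apply).mpr h1))
            · exact Or.inr (Quotient.sound' ((orbitRel_apply).mpr h1))
          · rintro (h | h)
            · rw [h, hfmk]
            · rw [h, hfmk]
              exact Quotient.sound' ((orbitRel_apply).mpr ⟨⟨α, hαG⟩, rfl⟩)
      calc Nat.card {p // f p = Quotient.mk'' x}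
          = Nat.card {p | f p = Quotient.mk'' x} := rfl
        _ = 2 := by rw [hset, Nat.card_coe_set_eq, Set.ncard_pair hne]
  calc Nat.card (orbitRel.Quotient (Subgroup.zpowers σ) X)
      = Nat.card (Σ q : orbitRel.Quotient G X, {p // f p = q}) :=
        (Nat.card_congr (Equiv.sigmaFiberEquiv f)).symm
    _ = ∑ q : orbitRel.Quotient G X, Nat.card {p // f p = q} := by
        classical
        rw [Nat.card_eq_fintype_card, Fintype.card_sigma]
        simp [Nat.card_eq_fintype_card]
    _ = ∑ q : orbitRel.Quotient G X, 2 := by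
        exact Finset.sum_congr rfl fun q _ => hfiber q
    _ = 2 * Nat.card (orbitRel.Quotient G X) := by
        rw [Finset.sum_const, Nat.card_eq_fintype_card]
        simp [mul_comm]


end

theorem stmt0 {X : Type*} [Fintype X] (r : ℕ) (hr : 1 ≤ r) (hX : Nat.card X = 2 * r)
    (α β : Equiv.Perm X) (hα : IsPairing α) (hβ : IsPairing β) :
    Nat.card (MulAction.orbitRel.Quotient
        (Subgroup.closure {α, β} : Subgroup (Equiv.Perm X)) X)
      = permCycles (α * β) / 2 ∧
    Nat.card (MulAction.orbitRel.Quotient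
        (Subgroup.closure {α, β} : Subgroup (Equiv.Perm X)) X)
      = r - permLength (α * β) / 2 := by
  have h := aux_card α β hα hβ
  have hcyc : permCycles (α * β) = 2 * Nat.card (MulAction.orbitRel.Quotient
      (Subgroup.closure {α, β} : Subgroup (Equiv.Perm X)) X) := h
  have hsurj : Function.Surjective
      (Quotient.mk'' : X → MulAction.orbitRel.Quotient (Subgroup.zpowers (α * β)) X) :=
    fun q => Quotient.inductionOn' q fun y => ⟨y, rfl⟩
  have hle : permCycles (α * β) ≤ Nat.card X :=
    Nat.card_le_card_of_surjective _ hsurj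
  unfold permLength
  rw [hX] at hle ⊢
  omega
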